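/- Let Q* be the unique bounded measurable fixed point of T, let π* : X → A be a measurable greedy policy with respect to Q*, let Q̂_k and Q̂_{k+1} be bounded measurable functions on X × A, set ε_{k+1} = T Q̂_k − Q̂_{k+1}, and let π_k : X → A be a measurable greedy policy with respect to Q̂_k. Then pointwise on X × A: γ·E^{π_k}(Q* − Q̂_k)(x,a) + ε_{k+1}(x,a) ≤ Q*(x,a) − Q̂_{k+1}(x,a) ≤ γ·E^{π*}(Q* − Q̂_k)(x,a) + ε_{k+1}(x,a). -/

import Mathlib

open MeasureTheory ProbabilityTheory

/-- A function on `X × A` is bounded and measurable. -/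
def BddMeas {X A : Type*} [MeasurableSpace X] [MeasurableSpace A]
    (Q : X × A → ℝ) : Prop :=
  Measurable Q ∧ ∃ M : ℝ, ∀ p : X × A, |Q p| ≤ M

/-- The Bellman optimality operator. -/
noncomputable def bellmanT {X A : Type*} [MeasurableSpace X] [MeasurableSpace A]
    (P : Kernel (X × A) X) (r : X × A → ℝ) (γ : ℝ) (Q : X × A → ℝ) :
    X × A → ℝ :=
  fun p => r p + γ * ∫ x', (⨆ a' : A, Q (x', a')) ∂(P p)

/-- The expectation operator `E^π` of a deterministic policy `π : X → A`
(identified with the kernel of point masses):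
`E^π Q (x,a) = ∫ Q(x', π(x')) P(dx'|x,a)`. -/
noncomputable def evalDetPol {X A : Type*} [MeasurableSpace X] [MeasurableSpace A]
    (P : Kernel (X × A) X) (π : X → A) (Q : X × A → ℝ) : X × A → ℝ :=
  fun p => ∫ x', Q (x', π x') ∂(P p)


section Aux

variable {X A : Type*} [MeasurableSpace X] [Fintype A] [Nonempty A] [MeasurableSpace A]
    [MeasurableSingletonClass A]

lemma aux_int_comp (μ : MeasureTheory.Measure X) [IsProbabilityMeasure μ] {Q : X × A → ℝ}
    (hQ : BddMeas Q) {π : X → A} (hπ : Measurable π) :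
    Integrable (fun x => Q (x, π x)) μ := by
  obtain ⟨hm, M, hM⟩ := hQ
  exact (integrable_const M).mono'
    ((hm.comp (measurable_id.prodMk hπ)).aestronglyMeasurable)
    (ae_of_all _ fun x => by simpa using hM (x, π x))

lemma aux_meas_sup {Q : X × A → ℝ} (hm : Measurable Q) :
    Measurable (fun x => ⨆ a : A, Q (x, a)) := by
  have h : (fun x => ⨆ a : A, Q (x, a)) =
      fun x => (Finset.univ : Finset A).sup' Finset.univ_nonempty (fun a => Q (x, a)) := by
    funext x
    exact (Finset.sup'_univ_eq_ciSup _).symm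
  rw [h]
  have hms : Measurable ((Finset.univ : Finset A).sup' Finset.univ_nonempty
      (fun a (x : X) => Q (x, a))) :=
    Finset.measurable_sup' _ fun a _ => hm.comp (measurable_id.prodMk measurable_const)
  have heq : (fun x => (Finset.univ : Finset A).sup' Finset.univ_nonempty
      (fun a => Q (x, a))) = (Finset.univ : Finset A).sup' Finset.univ_nonempty
      (fun a (x : X) => Q (x, a)) := by
    funext x
    exact (Finset.sup'_apply Finset.univ_nonempty (fun a (x : X) => Q (x, a)) x).symm
  rw [heq]
  exact hms

lemma aux_int_sup (μ : MeasureTheory.Measure X) [IsProbabilityMeasure μ] {Q : X × A → ℝ}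
    (hQ : BddMeas Q) :
    Integrable (fun x => ⨆ a : A, Q (x, a)) μ := by
  obtain ⟨hm, M, hM⟩ := hQ
  refine (integrable_const M).mono' (aux_meas_sup hm).aestronglyMeasurable
    (ae_of_all _ fun x => ?_)
  rw [Real.norm_eq_abs, abs_le]
  constructor
  · exact (abs_le.1 (hM (x, Classical.arbitrary A))).1.trans
      (le_ciSup (f := fun a : A => Q (x, a)) (Set.Finite.bddAbove (Set.finite_range _)) _)
  · exact ciSup_le fun a => (abs_le.1 (hM (x, a))).2

end Aux

/-- one-step error propagation sandwich. With `ε_{k+1} = T Q̂_k − Q̂_{k+1}`,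
`π_k` greedy w.r.t. `Q̂_k` and `π*` greedy w.r.t. `Q*`, pointwise
`γ·E^{π_k}(Q* − Q̂_k) + ε_{k+1} ≤ Q* − Q̂_{k+1} ≤ γ·E^{π*}(Q* − Q̂_k) + ε_{k+1}`. -/
theorem statement13
    {X A : Type*} [MeasurableSpace X]
    [Fintype A] [Nonempty A] [MeasurableSpace A] [MeasurableSingletonClass A]
    (P : Kernel (X × A) X) [IsMarkovKernel P]
    (r : X × A → ℝ) (hr_meas : Measurable r)
    (hr_bd : ∃ M : ℝ, ∀ p : X × A, |r p| ≤ M)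
    (γ : ℝ) (hγ0 : 0 < γ) (hγ1 : γ < 1)
    -- `Q*` is the unique bounded measurable fixed point of `T`
    (Qstar : X × A → ℝ) (hQstar_bm : BddMeas Qstar)
    (hQstar_fix : bellmanT P r γ Qstar = Qstar)
    (hQstar_unique : ∀ Q' : X × A → ℝ, BddMeas Q' → bellmanT P r γ Q' = Q' → Q' = Qstar)
    -- `π*` is a measurable greedy policy w.r.t. `Q*`
    (πstar : X → A) (hπstar_meas : Measurable πstar)
    (hπstar_greedy : ∀ x : X, Qstar (x, πstar x) = ⨆ a : A, Qstar (x, a))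
    -- `Q̂_k`, `Q̂_{k+1}` bounded measurable, `π_k` greedy w.r.t. `Q̂_k`
    (Qhatk Qhatk1 : X × A → ℝ) (hQhatk : BddMeas Qhatk) (hQhatk1 : BddMeas Qhatk1)
    (πk : X → A) (hπk_meas : Measurable πk)
    (hπk_greedy : ∀ x : X, Qhatk (x, πk x) = ⨆ a : A, Qhatk (x, a)) :
    ∀ p : X × A,
      γ * evalDetPol P πk (fun q => Qstar q - Qhatk q) p +
          (bellmanT P r γ Qhatk p - Qhatk1 p) ≤
        Qstar p - Qhatk1 p ∧
      Qstar p - Qhatk1 p ≤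
        γ * evalDetPol P πstar (fun q => Qstar q - Qhatk q) p +
          (bellmanT P r γ Qhatk p - Qhatk1 p) := by
  intro p
  have hPp : IsProbabilityMeasure (P p) := inferInstance
  -- integrabilities
  have hIsupS : Integrable (fun x => ⨆ a : A, Qstar (x, a)) (P p) := aux_int_sup _ hQstar_bm
  have hIsupK : Integrable (fun x => ⨆ a : A, Qhatk (x, a)) (P p) := aux_int_sup _ hQhatk
  have hISk : Integrable (fun x => Qstar (x, πk x)) (P p) := aux_int_comp _ hQstar_bm hπk_meas
  have hIKk : Integrable (fun x => Qhatk (x, πk x)) (P p) := aux_int_comp _ hQhatk hπk_meas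
  have hISs : Integrable (fun x => Qstar (x, πstar x)) (P p) := aux_int_comp _ hQstar_bm hπstar_meas
  have hIKs : Integrable (fun x => Qhatk (x, πstar x)) (P p) := aux_int_comp _ hQhatk hπstar_meas
  have hbdd : ∀ (Q : X × A → ℝ) (x : X), BddAbove (Set.range fun a : A => Q (x, a)) :=
    fun Q x => Set.Finite.bddAbove (Set.finite_range _)
  -- key identity
  have hkey : Qstar p - bellmanT P r γ Qhatk p
      = γ * ∫ x', ((⨆ a : A, Qstar (x', a)) - ⨆ a : A, Qhatk (x', a)) ∂(P p) := by
    rw [integral_sub hIsupS hIsupK]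
    conv_lhs => rw [← hQstar_fix]
    simp only [bellmanT]
    ring
  have hmain : Qstar p - Qhatk1 p
      = γ * (∫ x', ((⨆ a : A, Qstar (x', a)) - ⨆ a : A, Qhatk (x', a)) ∂(P p))
        + (bellmanT P r γ Qhatk p - Qhatk1 p) := by
    rw [← hkey]; ring
  constructor
  · rw [hmain]
    have hle : (∫ x', (Qstar (x', πk x') - Qhatk (x', πk x')) ∂(P p))
        ≤ ∫ x', ((⨆ a : A, Qstar (x', a)) - ⨆ a : A, Qhatk (x', a)) ∂(P p) := by
      refine integral_mono (hISk.sub hIKk) (hIsupS.sub hIsupK) fun x => ?_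
      have h1 : Qstar (x, πk x) ≤ ⨆ a : A, Qstar (x, a) := le_ciSup (hbdd Qstar x) _
      have h2 : (⨆ a : A, Qhatk (x, a)) = Qhatk (x, πk x) := (hπk_greedy x).symm
      simp only [h2]
      linarith
    have : evalDetPol P πk (fun q => Qstar q - Qhatk q) p
        = ∫ x', (Qstar (x', πk x') - Qhatk (x', πk x')) ∂(P p) := rfl
    rw [this]
    nlinarith [mul_le_mul_of_nonneg_left hle hγ0.le]
  · rw [hmain]
    have hle : (∫ x', ((⨆ a : A, Qstar (x', a)) - ⨆ a : A, Qhatk (x', a)) ∂(P p))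
        ≤ ∫ x', (Qstar (x', πstar x') - Qhatk (x', πstar x')) ∂(P p) := by
      refine integral_mono (hIsupS.sub hIsupK) (hISs.sub hIKs) fun x => ?_
      have h1 : Qhatk (x, πstar x) ≤ ⨆ a : A, Qhatk (x, a) := le_ciSup (hbdd Qhatk x) _
      have h2 : (⨆ a : A, Qstar (x, a)) = Qstar (x, πstar x) := (hπstar_greedy x).symm
      simp only [h2]
      linarith
    have : evalDetPol P πstar (fun q => Qstar q - Qhatk q) p
        = ∫ x', (Qstar (x', πstar x') - Qhatk (x', πstar x')) ∂(P p) := rfl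
    rw [this]
    nlinarith [mul_le_mul_of_nonneg_left hle hγ0.le]
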